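/- Under the standing hypotheses, assume in addition 0 < η < e^{σ}, 1 + ηe^{−σ} < e^{−σ/2}, and σ + u > 0. Let r > 0 and δ* ∈ (0,1) satisfy 1 + (2/σ)·log r < (1/(u + log 2))·log(1/δ*) − 1, and assume ∂₁G(0,y) ∉ L for every y ∈ e₃ + L with |y − e₃| < r. For x ∈ ℝ³ with |P_L x| = 1 and 0 < x₃ < δ*, let τ(x) denote the unique t > 0 with 0 < G₃(s,x) < 1 for s ∈ [0,t) and G₃(t,x) = 1. Then the travel-time map is continuously differentiable: the function (ψ, δ) ↦ τ((cos ψ, sin ψ, δ)) is C¹ on ℝ × (0, δ*). -/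

import Mathlib

noncomputable section
open Real Set

abbrev R3 := EuclideanSpace ℝ (Fin 3)

/-- Orthogonal projection onto `L = ℝe₁ ⊕ ℝe₂`. -/
def PL (x : R3) : R3 := WithLp.toLp 2 (fun i => if (i : ℕ) = 2 then 0 else x i)

/-- Orthogonal projection onto `U = ℝe₃`. -/
def PU (x : R3) : R3 := WithLp.toLp 2 (fun i => if (i : ℕ) = 2 then x i else 0)

/-- The plane `L = ℝe₁ ⊕ ℝe₂`. -/
def Lset : Set R3 := {x | x 2 = 0}

/-- The line `U = ℝe₃`. -/
def Uset : Set R3 := {x | x 0 = 0 ∧ x 1 = 0}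

/-- `B₁ = {x : |P_L x| ≤ 1, |P_U x| ≤ 1}`. -/
def B1 : Set R3 := {x | ‖PL x‖ ≤ 1 ∧ ‖PU x‖ ≤ 1}

/-- The linearized flow `T(t)`. -/
def Tmap (σ μ u t : ℝ) (x : R3) : R3 := WithLp.toLp 2 (fun i =>
  if (i : ℕ) = 0 then exp (σ * t) * (cos (μ * t) * x 0 + sin (μ * t) * x 1)
  else if (i : ℕ) = 1 then exp (σ * t) * (-(sin (μ * t)) * x 0 + cos (μ * t) * x 1)
  else exp (u * t) * x 2)

/-- A C¹ flow on ℝ³. -/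
def IsC1Flow (G : ℝ → R3 → R3) : Prop :=
  ContDiff ℝ 1 (fun p : ℝ × R3 => G p.1 p.2) ∧ (∀ x, G 0 x = x) ∧
    ∀ s t x, G (t + s) x = G t (G s x)

/-- `M` is invariant under the flow `G` in the set `N`. -/
def InvariantIn (G : ℝ → R3 → R3) (M N : Set R3) : Prop :=
  ∀ x ∈ M ∩ N, ∀ I : Set ℝ, (0 : ℝ) ∈ I → I.OrdConnected →
    (∀ t ∈ I, G t x ∈ N) → ∀ t ∈ I, G t x ∈ M

/-- The third basis vector `e₃`. -/
def e3 : R3 := WithLp.toLp 2 (fun i => if (i : ℕ) = 2 then 1 else 0)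

/-- The point `(cos ψ, sin ψ, δ)` on the cylinder. -/
def xpt (ψ δ : ℝ) : R3 := WithLp.toLp 2 (fun i =>
  if (i : ℕ) = 0 then cos ψ else if (i : ℕ) = 1 then sin ψ else δ)


/-! ### Auxiliary lemmas -/
open Filter Topology

lemma norm_sq3 (x : R3) : ‖x‖ = Real.sqrt (x 0^2 + x 1^2 + x 2^2) := by
  rw [EuclideanSpace.norm_eq]
  simp [Fin.sum_univ_three, sq_abs]

lemma norm_PL (x : R3) : ‖PL x‖ = Real.sqrt (x 0^2 + x 1^2) := by
  rw [norm_sq3]; simp [PL]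

lemma norm_PL_le (x : R3) : ‖PL x‖ ≤ ‖x‖ := by
  rw [norm_PL, norm_sq3]
  apply Real.sqrt_le_sqrt
  nlinarith [sq_nonneg (x 2)]

lemma norm_PU (x : R3) : ‖PU x‖ = |x 2| := by
  rw [norm_sq3]
  simp [PU]
  rw [show (x 2)^2 = |x 2|^2 by rw [sq_abs], Real.sqrt_sq (abs_nonneg _)]

lemma norm_PU_le (x : R3) : ‖PU x‖ ≤ ‖x‖ := by
  rw [norm_PU, norm_sq3]
  rw [show |x 2| = Real.sqrt (|x 2|^2) by rw [Real.sqrt_sq (abs_nonneg _)], sq_abs]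
  apply Real.sqrt_le_sqrt
  nlinarith [sq_nonneg (x 0), sq_nonneg (x 1)]

lemma PL_lin : IsLinearMap ℝ PL := by
  constructor
  · intro x y; ext i; simp only [PL, PiLp.add_apply, PiLp.toLp_apply]; split <;> simp
  · intro c x; ext i; simp only [PL, PiLp.smul_apply, smul_eq_mul, PiLp.toLp_apply]; split <;> simp

lemma PU_lin : IsLinearMap ℝ PU := by
  constructor
  · intro x y; ext i; simp only [PU, PiLp.add_apply, PiLp.toLp_apply]; split <;> simp
  · intro c x; ext i; simp only [PU, PiLp.smul_apply, smul_eq_mul, PiLp.toLp_apply]; split <;> simp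

/-- `PL` as a continuous linear map. -/
def PLc : R3 →L[ℝ] R3 := LinearMap.toContinuousLinearMap (IsLinearMap.mk' PL PL_lin)
/-- `PU` as a continuous linear map. -/
def PUc : R3 →L[ℝ] R3 := LinearMap.toContinuousLinearMap (IsLinearMap.mk' PU PU_lin)

lemma PLc_apply (x : R3) : PLc x = PL x := rfl
lemma PUc_apply (x : R3) : PUc x = PU x := rfl

lemma PL_PL (x : R3) : PL (PL x) = PL x := by
  ext i; simp only [PL, PiLp.toLp_apply]; split <;> rfl

lemma PU_PU (x : R3) : PU (PU x) = PU x := by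
  ext i; simp only [PU, PiLp.toLp_apply]; split <;> rfl

lemma zero_apply3 (i : Fin 3) : (0 : R3) i = 0 := rfl

lemma PL_PU (x : R3) : PL (PU x) = 0 := by
  ext i; simp only [PL, PU, zero_apply3, PiLp.toLp_apply]
  split <;> simp_all

lemma PU_PL (x : R3) : PU (PL x) = 0 := by
  ext i; simp only [PL, PU, zero_apply3, PiLp.toLp_apply]
  split <;> simp_all

lemma PL_add_PU (x : R3) : PL x + PU x = x := by
  ext i
  simp only [PiLp.add_apply, PL, PU, PiLp.toLp_apply]
  split <;> simp

lemma Tmap_apply2 (σ μ u t : ℝ) (x : R3) : Tmap σ μ u t x 2 = exp (u * t) * x 2 := rfl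

lemma norm_PL_Tmap (σ μ u t : ℝ) (x : R3) :
    ‖PL (Tmap σ μ u t x)‖ = exp (σ * t) * ‖PL x‖ := by
  rw [norm_PL, norm_PL]
  rw [show Tmap σ μ u t x 0 = exp (σ * t) * (cos (μ * t) * x 0 + sin (μ * t) * x 1) from rfl,
    show Tmap σ μ u t x 1 = exp (σ * t) * (-(sin (μ * t)) * x 0 + cos (μ * t) * x 1) from rfl]
  rw [show (exp (σ * t) * (cos (μ * t) * x 0 + sin (μ * t) * x 1))^2
      + (exp (σ * t) * (-(sin (μ * t)) * x 0 + cos (μ * t) * x 1))^2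
      = exp (σ*t)^2 * (x 0^2 + x 1^2) by
    have h := sin_sq_add_cos_sq (μ * t); nlinarith [h]]
  rw [Real.sqrt_mul (sq_nonneg _), Real.sqrt_sq (exp_nonneg _)]

lemma norm_PU_Tmap (σ μ u t : ℝ) (x : R3) :
    ‖PU (Tmap σ μ u t x)‖ = exp (u * t) * ‖PU x‖ := by
  rw [norm_PU, norm_PU, Tmap_apply2, abs_mul, abs_of_pos (exp_pos _)]

lemma xpt_apply2 (ψ δ : ℝ) : xpt ψ δ 2 = δ := rfl

lemma norm_PL_xpt (ψ δ : ℝ) : ‖PL (xpt ψ δ)‖ = 1 := by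
  rw [norm_PL, show xpt ψ δ 0 = cos ψ from rfl, show xpt ψ δ 1 = sin ψ from rfl]
  rw [show cos ψ^2 + sin ψ^2 = 1 by have := sin_sq_add_cos_sq ψ; linarith]
  exact Real.sqrt_one

lemma sub_e3_norm (y : R3) (hy : y 2 = 1) : ‖y - e3‖ = ‖PL y‖ := by
  rw [norm_sq3, norm_PL]
  have h0 : (y - e3) 0 = y 0 := by simp [PiLp.sub_apply, e3]
  have h1 : (y - e3) 1 = y 1 := by simp [PiLp.sub_apply, e3]
  have h2 : (y - e3) 2 = 0 := by simp [PiLp.sub_apply, e3, hy]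
  rw [h0, h1, h2]; ring_nf

lemma sub_e3_Lset (y : R3) (hy : y 2 = 1) : y - e3 ∈ Lset := by
  simp [Lset, PiLp.sub_apply, e3, hy]

lemma PL_eq_zero_iff (x : R3) : PL x = 0 ↔ x 0 = 0 ∧ x 1 = 0 := by
  constructor
  · intro h
    constructor
    · have := congrArg (fun z : R3 => z 0) h; simpa [PL] using this
    · have := congrArg (fun z : R3 => z 1) h; simpa [PL] using this
  · intro ⟨h0, h1⟩
    ext i
    simp only [PL, zero_apply3, PiLp.toLp_apply]
    split <;> simp_all
    rcases i with ⟨iv, hiv⟩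
    interval_cases iv <;> simp_all

lemma PU_eq_zero_iff (x : R3) : PU x = 0 ↔ x 2 = 0 := by
  constructor
  · intro h; have := congrArg (fun z : R3 => z 2) h; simpa [PU] using this
  · intro h2
    ext i
    simp only [PU, zero_apply3, PiLp.toLp_apply]
    split <;> simp_all
    rename_i h
    have : i = 2 := Fin.ext (by simpa using h)
    rw [this, h2]

lemma PU_mem_B1 (x : R3) (hx : x ∈ B1) : PU x ∈ B1 := by
  obtain ⟨h1, h2⟩ := hx
  exact ⟨by rw [PL_PU]; simp, by rw [PU_PU]; exact h2⟩

lemma PL_mem_B1 (x : R3) (hx : x ∈ B1) : PL x ∈ B1 := by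
  obtain ⟨h1, h2⟩ := hx
  exact ⟨by rw [PL_PL]; exact h1, by rw [PU_PL]; simp⟩

section Flow
variable {G : ℝ → R3 → R3}

lemma contDiff_Gt (hG : IsC1Flow G) (t : ℝ) : ContDiff ℝ 1 (G t) := by
  have : (G t) = (fun p : ℝ × R3 => G p.1 p.2) ∘ (fun x : R3 => (t, x)) := rfl
  rw [this]
  exact hG.1.comp (contDiff_const.prodMk contDiff_id)

lemma hasFDerivAt_Gt (hG : IsC1Flow G) (t : ℝ) (x : R3) :
    HasFDerivAt (G t) (fderiv ℝ (G t) x) x :=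
  (((contDiff_Gt hG t).differentiable one_ne_zero) x).hasFDerivAt

lemma Lset_PU (y : R3) (hy : y ∈ Lset) : PU y = 0 := (PU_eq_zero_iff y).2 hy

lemma Uset_PL (y : R3) (hy : y ∈ Uset) : PL y = 0 := (PL_eq_zero_iff y).2 hy

/-- Contraction of the `L`-component over time `t ∈ [0,1]`. -/
lemma stepL {σ μ u η rB : ℝ}
    (hG : IsC1Flow G)
    (hB1B : B1 ⊆ Metric.closedBall (0 : R3) rB)
    (hD2 : ∀ t ∈ Icc (0:ℝ) 1, ∀ x ∈ B1, ∀ y : R3,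
      ‖fderiv ℝ (G t) x y - Tmap σ μ u t y‖ ≤ η * ‖y‖)
    (hGB : ∀ t ∈ Icc (0:ℝ) 1, ∀ x ∈ B1, G t x ∈ Metric.closedBall (0 : R3) rB)
    (hUinv : InvariantIn G Uset (Metric.closedBall 0 rB))
    {t : ℝ} (ht : t ∈ Icc (0:ℝ) 1) {x : R3} (hx : x ∈ B1) :
    ‖PL (G t x)‖ ≤ (exp (σ * t) + η) * ‖PL x‖ := by
  set y := PU x with hy
  have hyB1 : y ∈ B1 := PU_mem_B1 x hx
  have hyU : y ∈ Uset := by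
    constructor <;> rfl
  -- invariance: G t y ∈ Uset
  have hGtyU : G t y ∈ Uset := by
    refine hUinv y ⟨hyU, hB1B hyB1⟩ (Icc 0 1) (by constructor <;> norm_num)
      ordConnected_Icc (fun s hs => hGB s hs y hyB1) t ht
  have hPLGty : PL (G t y) = 0 := Uset_PL _ hGtyU
  -- the path
  set v := PL x with hv
  have hvnorm : ‖v‖ ≤ 1 := hx.1
  set f : ℝ → R3 := fun s => PLc (G t (y + s • v)) with hf
  have hzB1 : ∀ s ∈ Icc (0:ℝ) 1, y + s • v ∈ B1 := by
    intro s hs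
    constructor
    · have : PL (y + s • v) = s • v := by
        rw [PL_lin.1, PL_lin.2, PL_PU, PL_PL, zero_add]
      rw [this, norm_smul]
      calc |s| * ‖v‖ ≤ 1 * 1 := by
            apply mul_le_mul _ hvnorm (norm_nonneg _) zero_le_one
            rw [abs_of_nonneg hs.1]; exact hs.2
        _ = 1 := one_mul 1
    · have : PU (y + s • v) = PU x := by
        rw [PU_lin.1, PU_lin.2, PU_PU, PU_PL, smul_zero, add_zero]
      rw [this]; exact hx.2
  have hderiv : ∀ s ∈ Icc (0:ℝ) 1,
      HasDerivWithinAt f (PLc (fderiv ℝ (G t) (y + s • v) v)) (Icc (0:ℝ) 1) s := by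
    intro s hs
    have h1 : HasDerivAt (fun s : ℝ => y + s • v) v s := by
      simpa using (hasDerivAt_id s).smul_const v |>.const_add y
    have h2 := (hasFDerivAt_Gt hG t (y + s • v)).comp_hasDerivAt s h1
    exact (PLc.hasFDerivAt.comp_hasDerivAt s h2).hasDerivWithinAt
  have hbound : ∀ s ∈ Ico (0:ℝ) 1, ‖PLc (fderiv ℝ (G t) (y + s • v) v)‖
      ≤ (exp (σ * t) + η) * ‖v‖ := by
    intro s hs
    have hz := hzB1 s (Ico_subset_Icc_self hs)
    have hD := hD2 t ht _ hz v
    calc ‖PLc (fderiv ℝ (G t) (y + s • v) v)‖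
        = ‖PL (fderiv ℝ (G t) (y + s • v) v - Tmap σ μ u t v)
            + PL (Tmap σ μ u t v)‖ := by
          rw [← PL_lin.1, sub_add_cancel]; rfl
      _ ≤ ‖PL (fderiv ℝ (G t) (y + s • v) v - Tmap σ μ u t v)‖
            + ‖PL (Tmap σ μ u t v)‖ := norm_add_le _ _
      _ ≤ η * ‖v‖ + exp (σ * t) * ‖PL v‖ := by
          gcongr
          · exact le_trans (norm_PL_le _) hD
          · exact le_of_eq (norm_PL_Tmap σ μ u t v)
      _ = (exp (σ * t) + η) * ‖v‖ := by rw [hv, PL_PL]; ring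
  have := norm_image_sub_le_of_norm_deriv_le_segment_01' hderiv hbound
  have hf1 : f 1 = PL (G t x) := by
    rw [hf]
    simp only [one_smul]
    rw [hv, hy, show PU x + PL x = x by rw [add_comm]; exact PL_add_PU x]
    rfl
  have hf0 : f 0 = 0 := by
    rw [hf]; simp only [zero_smul, add_zero]
    rw [PLc_apply, hPLGty]
  rw [hf1, hf0, sub_zero] at this
  exact this

/-- Growth of the `U`-component over time `t ∈ [0,1]`. -/
lemma stepU {σ μ u η rB : ℝ}
    (hG : IsC1Flow G)
    (hB1B : B1 ⊆ Metric.closedBall (0 : R3) rB)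
    (hD2 : ∀ t ∈ Icc (0:ℝ) 1, ∀ x ∈ B1, ∀ y : R3,
      ‖fderiv ℝ (G t) x y - Tmap σ μ u t y‖ ≤ η * ‖y‖)
    (hGB : ∀ t ∈ Icc (0:ℝ) 1, ∀ x ∈ B1, G t x ∈ Metric.closedBall (0 : R3) rB)
    (hLinv : InvariantIn G Lset (Metric.closedBall 0 rB))
    {t : ℝ} (ht : t ∈ Icc (0:ℝ) 1) {x : R3} (hx : x ∈ B1) :
    ‖PU (G t x)‖ ≤ (exp (u * t) + η) * ‖PU x‖ := by
  set y := PL x with hy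
  have hyB1 : y ∈ B1 := PL_mem_B1 x hx
  have hyL : y ∈ Lset := rfl
  have hGtyL : G t y ∈ Lset := by
    refine hLinv y ⟨hyL, hB1B hyB1⟩ (Icc 0 1) (by constructor <;> norm_num)
      ordConnected_Icc (fun s hs => hGB s hs y hyB1) t ht
  have hPUGty : PU (G t y) = 0 := Lset_PU _ hGtyL
  set v := PU x with hv
  have hvnorm : ‖v‖ ≤ 1 := hx.2
  set f : ℝ → R3 := fun s => PUc (G t (y + s • v)) with hf
  have hzB1 : ∀ s ∈ Icc (0:ℝ) 1, y + s • v ∈ B1 := by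
    intro s hs
    constructor
    · have : PL (y + s • v) = PL x := by
        rw [PL_lin.1, PL_lin.2, PL_PL, PL_PU, smul_zero, add_zero]
      rw [this]; exact hx.1
    · have : PU (y + s • v) = s • v := by
        rw [PU_lin.1, PU_lin.2, PU_PL, PU_PU, zero_add]
      rw [this, norm_smul]
      calc |s| * ‖v‖ ≤ 1 * 1 := by
            apply mul_le_mul _ hvnorm (norm_nonneg _) zero_le_one
            rw [abs_of_nonneg hs.1]; exact hs.2
        _ = 1 := one_mul 1
  have hderiv : ∀ s ∈ Icc (0:ℝ) 1,
      HasDerivWithinAt f (PUc (fderiv ℝ (G t) (y + s • v) v)) (Icc (0:ℝ) 1) s := by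
    intro s hs
    have h1 : HasDerivAt (fun s : ℝ => y + s • v) v s := by
      simpa using (hasDerivAt_id s).smul_const v |>.const_add y
    have h2 := (hasFDerivAt_Gt hG t (y + s • v)).comp_hasDerivAt s h1
    exact (PUc.hasFDerivAt.comp_hasDerivAt s h2).hasDerivWithinAt
  have hbound : ∀ s ∈ Ico (0:ℝ) 1, ‖PUc (fderiv ℝ (G t) (y + s • v) v)‖
      ≤ (exp (u * t) + η) * ‖v‖ := by
    intro s hs
    have hz := hzB1 s (Ico_subset_Icc_self hs)
    have hD := hD2 t ht _ hz v
    calc ‖PUc (fderiv ℝ (G t) (y + s • v) v)‖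
        = ‖PU (fderiv ℝ (G t) (y + s • v) v - Tmap σ μ u t v)
            + PU (Tmap σ μ u t v)‖ := by
          rw [← PU_lin.1, sub_add_cancel]; rfl
      _ ≤ ‖PU (fderiv ℝ (G t) (y + s • v) v - Tmap σ μ u t v)‖
            + ‖PU (Tmap σ μ u t v)‖ := norm_add_le _ _
      _ ≤ η * ‖v‖ + exp (u * t) * ‖PU v‖ := by
          gcongr
          · exact le_trans (norm_PU_le _) hD
          · exact le_of_eq (norm_PU_Tmap σ μ u t v)
      _ = (exp (u * t) + η) * ‖v‖ := by rw [hv, PU_PU]; ring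
  have := norm_image_sub_le_of_norm_deriv_le_segment_01' hderiv hbound
  have hf1 : f 1 = PU (G t x) := by
    rw [hf]
    simp only [one_smul]
    rw [hv, hy, PL_add_PU x]
    rfl
  have hf0 : f 0 = 0 := by
    rw [hf]; simp only [zero_smul, add_zero]
    rw [PUc_apply, hPUGty]
  rw [hf1, hf0, sub_zero] at this
  exact this

end Flow

section Iterate
set_option maxHeartbeats 1000000
variable {G : ℝ → R3 → R3} {u σ μ η rB : ℝ}

lemma key_bound
    (hu : 0 < u) (hσ : σ < 0) (hη : 0 < η)
    (hB1B : B1 ⊆ Metric.closedBall (0 : R3) rB)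
    (hG : IsC1Flow G)
    (hD2 : ∀ t ∈ Icc (0:ℝ) 1, ∀ x ∈ B1, ∀ y : R3,
      ‖fderiv ℝ (G t) x y - Tmap σ μ u t y‖ ≤ η * ‖y‖)
    (hGB : ∀ t ∈ Icc (0:ℝ) 1, ∀ x ∈ B1, G t x ∈ Metric.closedBall (0 : R3) rB)
    (hLinv : InvariantIn G Lset (Metric.closedBall 0 rB))
    (hUinv : InvariantIn G Uset (Metric.closedBall 0 rB))
    (hησ : η < exp σ) (hησ2 : 1 + η * exp (-σ) < exp (-σ / 2))
    {r : ℝ} (hr : 0 < r) {δstar : ℝ} (hδstar : δstar ∈ Ioo (0 : ℝ) 1)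
    (hrδ : 1 + 2 / σ * Real.log r < 1 / (u + Real.log 2) * Real.log (1 / δstar) - 1)
    {x : R3} (hPL1 : ‖PL x‖ = 1) (hx2pos : 0 < x 2) (hx2lt : x 2 < δstar)
    {t₀ : ℝ} (ht₀pos : 0 < t₀)
    (hmid : ∀ s ∈ Ico (0 : ℝ) t₀, 0 < G s x 2 ∧ G s x 2 < 1)
    (hend : G t₀ x 2 = 1) :
    ‖PL (G t₀ x)‖ < r := by
  obtain ⟨hδ0, hδ1⟩ := hδstar
  -- basic facts
  have hexpneg : (1:ℝ) < exp (-σ) := by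
    rw [show (1:ℝ) = exp 0 by simp]; exact exp_lt_exp.2 (by linarith)
  have hση : exp σ + η < exp (σ / 2) := by
    have h := mul_lt_mul_of_pos_left hησ2 (exp_pos σ)
    have e1 : exp σ * (1 + η * exp (-σ)) = exp σ + η := by
      rw [mul_add, mul_one, show exp σ * (η * exp (-σ)) = η * (exp σ * exp (-σ)) by ring,
        ← exp_add]; simp
    have e2 : exp σ * exp (-σ / 2) = exp (σ / 2) := by rw [← exp_add]; ring_nf
    rw [e1, e2] at h; exact h
  have h1η : 1 + η < exp (-σ / 2) := by nlinarith
  have huη : exp u + η ≤ 2 * exp u := by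
    have : η < 1 := lt_trans hησ (by rw [show (1:ℝ) = exp 0 by simp]; exact exp_lt_exp.2 hσ)
    have : η < exp u := lt_trans this (by rw [show (1:ℝ) = exp 0 by simp]; exact exp_lt_exp.2 hu)
    linarith
  have hpos2 : ∀ s, 0 ≤ s → s ≤ t₀ → 0 < G s x 2 ∧ G s x 2 ≤ 1 := by
    intro s hs0 hs1
    rcases lt_or_eq_of_le hs1 with h | h
    · obtain ⟨a, b⟩ := hmid s ⟨hs0, h⟩; exact ⟨a, le_of_lt b⟩
    · rw [h, hend]; norm_num
  -- induction
  have main : ∀ n : ℕ, (n : ℝ) ≤ t₀ →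
      G n x ∈ B1 ∧ ‖PL (G n x)‖ ≤ exp (σ * n / 2) ∧ G n x 2 ≤ (2 * exp u)^n * x 2 := by
    intro n
    induction n with
    | zero =>
      intro _
      rw [Nat.cast_zero, hG.2.1 x]
      refine ⟨⟨le_of_eq hPL1, ?_⟩, by simp [hPL1], by simp⟩
      rw [norm_PU, abs_of_pos hx2pos]; linarith
    | succ n ih =>
      intro hn1
      have hn : (n : ℝ) ≤ t₀ := by push_cast at hn1 ⊢; linarith
      obtain ⟨hB1n, hPLn, hPUn⟩ := ih hn
      have hstep : G ((n+1 : ℕ) : ℝ) x = G 1 (G n x) := by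
        rw [show ((n+1:ℕ):ℝ) = 1 + (n:ℝ) by push_cast; ring, hG.2.2]
      have h01 : (1:ℝ) ∈ Icc (0:ℝ) 1 := by norm_num
      have hL := stepL hG hB1B hD2 hGB hUinv h01 hB1n
      have hU := stepU hG hB1B hD2 hGB hLinv h01 hB1n
      rw [mul_one] at hL hU
      have hposn : 0 < G (n:ℝ) x 2 := (hpos2 _ (Nat.cast_nonneg n) hn).1
      have hpossn : 0 < G ((n+1:ℕ):ℝ) x 2 ∧ G ((n+1:ℕ):ℝ) x 2 ≤ 1 :=
        hpos2 _ (Nat.cast_nonneg _) hn1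
      have hPUn' : G ((n+1:ℕ):ℝ) x 2 ≤ (2 * exp u)^(n+1) * x 2 := by
        have : ‖PU (G 1 (G (n:ℝ) x))‖ ≤ (2 * exp u) * G (n:ℝ) x 2 := by
          refine le_trans hU ?_
          rw [norm_PU, abs_of_pos hposn]
          exact mul_le_mul_of_nonneg_right huη (le_of_lt hposn)
        rw [hstep]
        calc G 1 (G (n:ℝ) x) 2 ≤ |G 1 (G (n:ℝ) x) 2| := le_abs_self _
          _ = ‖PU (G 1 (G (n:ℝ) x))‖ := (norm_PU _).symm
          _ ≤ (2 * exp u) * G (n:ℝ) x 2 := this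
          _ ≤ (2 * exp u) * ((2 * exp u)^n * x 2) := by
              apply mul_le_mul_of_nonneg_left hPUn (by positivity)
          _ = (2 * exp u)^(n+1) * x 2 := by ring
      have hPLn' : ‖PL (G ((n+1:ℕ):ℝ) x)‖ ≤ exp (σ * (n+1:ℕ) / 2) := by
        rw [hstep]
        calc ‖PL (G 1 (G (n:ℝ) x))‖ ≤ (exp σ + η) * ‖PL (G (n:ℝ) x)‖ := hL
          _ ≤ exp (σ/2) * exp (σ * n / 2) := by
              apply mul_le_mul (le_of_lt hση) hPLn (norm_nonneg _) (le_of_lt (exp_pos _))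
          _ = exp (σ * (n+1:ℕ) / 2) := by rw [← exp_add]; push_cast; ring_nf
      refine ⟨⟨?_, ?_⟩, hPLn', hPUn'⟩
      · refine le_trans hPLn' ?_
        rw [show (1:ℝ) = exp 0 by simp]
        apply exp_le_exp.2
        have : (0:ℝ) ≤ ((n+1:ℕ):ℝ) := Nat.cast_nonneg _
        nlinarith
      · rw [norm_PU, abs_of_pos hpossn.1]; exact hpossn.2
  -- split t₀ = t + n
  set n := ⌊t₀⌋₊ with hn
  have hnle : (n : ℝ) ≤ t₀ := Nat.floor_le (le_of_lt ht₀pos)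
  have hlt : t₀ < n + 1 := Nat.lt_floor_add_one t₀
  set t := t₀ - n with htdef
  have htIcc : t ∈ Icc (0:ℝ) 1 := ⟨by simp [htdef]; linarith, by simp [htdef]; linarith⟩
  obtain ⟨hB1n, hPLn, hPUn⟩ := main n hnle
  have hsplit : G t₀ x = G t (G n x) := by
    rw [show t₀ = t + (n:ℝ) by ring, hG.2.2]
  have hL := stepL hG hB1B hD2 hGB hUinv htIcc hB1n
  have hU := stepU hG hB1B hD2 hGB hLinv htIcc hB1n
  -- lower bound on n
  have hposn : 0 < G (n:ℝ) x 2 := (hpos2 _ (Nat.cast_nonneg n) hnle).1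
  have hone : 1 < (2 * exp u)^(n+1) * δstar := by
    have h1 : (1:ℝ) = G t₀ x 2 := hend.symm
    have h2 : G t₀ x 2 ≤ (2 * exp u) * G (n:ℝ) x 2 := by
      rw [hsplit]
      calc G t (G (n:ℝ) x) 2 ≤ |G t (G (n:ℝ) x) 2| := le_abs_self _
        _ = ‖PU (G t (G (n:ℝ) x))‖ := (norm_PU _).symm
        _ ≤ (exp (u*t) + η) * ‖PU (G (n:ℝ) x)‖ := hU
        _ = (exp (u*t) + η) * G (n:ℝ) x 2 := by rw [norm_PU, abs_of_pos hposn]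
        _ ≤ (2 * exp u) * G (n:ℝ) x 2 := by
            apply mul_le_mul_of_nonneg_right _ (le_of_lt hposn)
            have : exp (u * t) ≤ exp u := exp_le_exp.2 (by nlinarith [htIcc.1, htIcc.2])
            linarith
    calc (1:ℝ) = G t₀ x 2 := h1
      _ ≤ (2 * exp u) * G (n:ℝ) x 2 := h2
      _ ≤ (2 * exp u) * ((2 * exp u)^n * x 2) := by
          apply mul_le_mul_of_nonneg_left hPUn (by positivity)
      _ = (2 * exp u)^(n+1) * x 2 := by ring
      _ < (2 * exp u)^(n+1) * δstar := by
          apply mul_lt_mul_of_pos_left hx2lt (by positivity)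
  have hlog2u : 0 < u + Real.log 2 := by
    have : (0:ℝ) < Real.log 2 := Real.log_pos (by norm_num)
    linarith
  have hnlb : 1 / (u + Real.log 2) * Real.log (1 / δstar) - 1 < (n:ℝ) := by
    have hlog := Real.log_lt_log (by norm_num) hone
    rw [Real.log_one, Real.log_mul (by positivity) (ne_of_gt hδ0), Real.log_pow,
      Real.log_mul (by norm_num) (ne_of_gt (exp_pos u)), Real.log_exp] at hlog
    have hlogd : Real.log (1 / δstar) = - Real.log δstar := by
      rw [one_div, Real.log_inv]
    have h2 : Real.log (1 / δstar) < ((n:ℝ)+1) * (u + Real.log 2) := by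
      rw [hlogd]
      have heq : ((n:ℝ)+1) * (u + Real.log 2) = ((n+1:ℕ):ℝ) * (Real.log 2 + u) := by
        push_cast; ring
      rw [heq]
      linarith
    have h3 : 1 / (u + Real.log 2) * Real.log (1 / δstar) < (n:ℝ) + 1 := by
      rw [one_div, inv_mul_eq_div, div_lt_iff₀ hlog2u]
      linarith
    linarith
  have hnr : 2 / σ * Real.log r < (n:ℝ) - 1 := by linarith
  have hexplog : exp (σ / 2 * ((n:ℝ) - 1)) < r := by
    rw [show r = exp (Real.log r) by rw [Real.exp_log hr]]
    apply exp_lt_exp.2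
    have h := mul_lt_mul_of_neg_left hnr (show σ/2 < 0 by linarith)
    have hσne : σ ≠ 0 := ne_of_lt hσ
    rw [show σ/2 * (2/σ * Real.log r) = Real.log r by field_simp] at h
    linarith [h]
  -- final estimate
  calc ‖PL (G t₀ x)‖ = ‖PL (G t (G (n:ℝ) x))‖ := by rw [hsplit]
    _ ≤ (exp (σ * t) + η) * ‖PL (G (n:ℝ) x)‖ := hL
    _ ≤ (1 + η) * exp (σ * n / 2) := by
        apply mul_le_mul _ hPLn (norm_nonneg _) (by positivity)
        have : exp (σ * t) ≤ 1 := by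
          rw [show (1:ℝ) = exp 0 by simp]
          apply exp_le_exp.2
          nlinarith [htIcc.1, htIcc.2]
        linarith
    _ < exp (-σ/2) * exp (σ * n / 2) := by
        apply mul_lt_mul_of_pos_right h1η (exp_pos _)
    _ = exp (σ / 2 * ((n:ℝ) - 1)) := by rw [← exp_add]; ring_nf
    _ < r := hexplog

end Iterate

set_option maxHeartbeats 1600000 in
theorem statement12
    (u σ μ η rB : ℝ) (hu : 0 < u) (hσ : σ < 0) (hμ : 0 < μ) (hη : 0 < η)
    (hB1B : B1 ⊆ Metric.closedBall (0 : R3) rB)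
    (G : ℝ → R3 → R3) (hG : IsC1Flow G) (hG0 : ∀ t : ℝ, G t 0 = 0)
    (hD2 : ∀ t ∈ Icc (0:ℝ) 1, ∀ x ∈ B1, ∀ y : R3,
      ‖fderiv ℝ (G t) x y - Tmap σ μ u t y‖ ≤ η * ‖y‖)
    (hGB : ∀ t ∈ Icc (0:ℝ) 1, ∀ x ∈ B1, G t x ∈ Metric.closedBall (0 : R3) rB)
    (hLinv : InvariantIn G Lset (Metric.closedBall 0 rB))
    (hUinv : InvariantIn G Uset (Metric.closedBall 0 rB))
    (hησ : η < exp σ) (hησ2 : 1 + η * exp (-σ) < exp (-σ / 2)) (hσu : 0 < σ + u)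
    (r : ℝ) (hr : 0 < r) (δstar : ℝ) (hδstar : δstar ∈ Ioo (0 : ℝ) 1)
    (hrδ : 1 + 2 / σ * Real.log r < 1 / (u + Real.log 2) * Real.log (1 / δstar) - 1)
    (htrans : ∀ y : R3, y - e3 ∈ Lset → ‖y - e3‖ < r → deriv (fun s => G s y) 0 ∉ Lset)
    (τ : R3 → ℝ)
    (hτ : ∀ x : R3, ‖PL x‖ = 1 → 0 < x 2 → x 2 < δstar →
      0 < τ x ∧ (∀ s ∈ Ico (0 : ℝ) (τ x), 0 < G s x 2 ∧ G s x 2 < 1) ∧ G (τ x) x 2 = 1) :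
    ContDiffOn ℝ 1 (fun p : ℝ × ℝ => τ (xpt p.1 p.2)) (univ ×ˢ Ioo (0 : ℝ) δstar) := by
  obtain ⟨hδ0, hδ1⟩ := hδstar
  -- the map F
  set q2 : R3 →L[ℝ] ℝ := EuclideanSpace.proj (2 : Fin 3) with hq2
  have hq2app : ∀ z : R3, q2 z = z 2 := fun z => rfl
  have hxptC : ContDiff ℝ 1 (fun p : ℝ × ℝ => xpt p.1 p.2) := by
    rw [contDiff_euclidean]
    intro i
    rcases i with ⟨iv, hiv⟩
    interval_cases iv
    · exact (Real.contDiff_cos.comp contDiff_fst : ContDiff ℝ 1 (fun p : ℝ × ℝ => cos p.1))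
    · exact (Real.contDiff_sin.comp contDiff_fst : ContDiff ℝ 1 (fun p : ℝ × ℝ => sin p.1))
    · exact (contDiff_snd : ContDiff ℝ 1 (fun p : ℝ × ℝ => p.2))
  set F : (ℝ × ℝ) × ℝ → ℝ := fun w => G w.2 (xpt w.1.1 w.1.2) 2 with hFdef
  have hF : ContDiff ℝ 1 F := by
    have h1 : ContDiff ℝ 1 (fun w : (ℝ × ℝ) × ℝ => G w.2 (xpt w.1.1 w.1.2)) :=
      hG.1.comp (contDiff_snd.prodMk (hxptC.comp contDiff_fst))
    exact q2.contDiff.comp h1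
  -- slice derivatives
  have hslice : ∀ w : (ℝ × ℝ) × ℝ,
      HasDerivAt (fun t => F (w.1, t)) (fderiv ℝ F w (((0:ℝ),(0:ℝ)),(1:ℝ))) w.2 := by
    intro w
    have hFd : HasFDerivAt F (fderiv ℝ F w) w := (hF.differentiable one_ne_zero w).hasFDerivAt
    have hline : HasDerivAt (fun t : ℝ => ((w.1, t) : (ℝ × ℝ) × ℝ))
        ((((0:ℝ),(0:ℝ)),(1:ℝ)) : (ℝ × ℝ) × ℝ) w.2 := by
      exact (hasDerivAt_const w.2 w.1).prodMk (hasDerivAt_id w.2)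
    have := hFd.comp_hasDerivAt w.2 hline
    exact this
  have hdtF : Continuous (fun w => fderiv ℝ F w (((0:ℝ),(0:ℝ)),(1:ℝ))) :=
    (hF.continuous_fderiv one_ne_zero).clm_apply continuous_const
  -- vector field derivative
  have hvec : ∀ y : R3, HasDerivAt (fun s => G s y) (deriv (fun s => G s y) 0) 0 := by
    intro y
    have hGy : ContDiff ℝ 1 (fun s : ℝ => G s y) := hG.1.comp (contDiff_id.prodMk contDiff_const)
    exact ((hGy.differentiable one_ne_zero) 0).hasDerivAt
  -- main work, pointwise
  intro p₀ hp₀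
  suffices h : ContDiffAt ℝ 1 (fun p : ℝ × ℝ => τ (xpt p.1 p.2)) p₀ from h.contDiffWithinAt
  have hδ₀ : p₀.2 ∈ Ioo (0:ℝ) δstar := hp₀.2
  set x₀ : R3 := xpt p₀.1 p₀.2 with hx₀
  obtain ⟨ht₀pos, hmid, hend⟩ := hτ x₀ (norm_PL_xpt _ _) hδ₀.1 hδ₀.2
  set t₀ : ℝ := τ x₀ with ht₀
  set y₀ : R3 := G t₀ x₀ with hy₀
  have hy₀2 : y₀ 2 = 1 := hend
  -- the hitting point is close to e3
  have hPLy₀ : ‖PL y₀‖ < r :=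
    key_bound hu hσ hη hB1B hG hD2 hGB hLinv hUinv hησ hησ2 hr ⟨hδ0, hδ1⟩ hrδ
      (norm_PL_xpt _ _) hδ₀.1 hδ₀.2 ht₀pos hmid hend
  have htr := htrans y₀ (sub_e3_Lset _ hy₀2)
    (by rw [sub_e3_norm _ hy₀2]; exact hPLy₀)
  set v : R3 := deriv (fun s => G s y₀) 0 with hv
  have hv2ne : v 2 ≠ 0 := htr
  -- derivative of t ↦ F (p₀, t) at t₀ equals v 2
  have hDt : HasDerivAt (fun t => F (p₀, t)) (v 2) t₀ := by
    have hshift : (fun s => G (s + t₀) x₀) = fun s => G s y₀ := by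
      funext s; exact hG.2.2 t₀ s x₀
    have h1 : HasDerivAt (fun s => G (s + t₀) x₀) v 0 := by
      rw [hshift]; exact hvec y₀
    have h2 : HasDerivAt (fun t => G t x₀) v t₀ := by
      have hsub : HasDerivAt (fun t : ℝ => t - t₀) 1 t₀ := by
        simpa using (hasDerivAt_id t₀).sub_const t₀
      have h2' := HasDerivAt.scomp_of_eq (h := fun t : ℝ => t - t₀) (x := t₀) h1 hsub (by ring)
      have hcomp : ((fun s => G (s + t₀) x₀) ∘ fun t : ℝ => t - t₀) = (fun t => G t x₀) := by
        funext t; simp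
      rw [hcomp, one_smul] at h2'
      exact h2'
    have h3 := q2.hasFDerivAt.comp_hasDerivAt t₀ h2
    exact h3
  set w₀ : (ℝ × ℝ) × ℝ := (p₀, t₀) with hw₀
  have hv2eq : fderiv ℝ F w₀ (((0:ℝ),(0:ℝ)),(1:ℝ)) = v 2 := by
    exact HasDerivAt.unique (hslice w₀) hDt
  -- positivity of v 2
  have hv2pos : 0 < v 2 := by
    rcases lt_trichotomy (v 2) 0 with h | h | h
    · exfalso
      have hts : Tendsto (slope (fun t => F (p₀, t)) t₀) (𝓝[≠] t₀) (𝓝 (v 2)) :=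
        hasDerivAt_iff_tendsto_slope.1 hDt
      have hts' : Tendsto (slope (fun t => F (p₀, t)) t₀) (𝓝[<] t₀) (𝓝 (v 2)) :=
        hts.mono_left (nhdsWithin_mono _ (fun s hs => ne_of_lt hs))
      have hge : 0 ≤ v 2 := by
        refine ge_of_tendsto hts' ?_
        filter_upwards [Ioo_mem_nhdsLT_of_mem (show t₀ ∈ Ioc 0 t₀ from ⟨ht₀pos, le_rfl⟩)]
          with s hs
        rw [slope_def_field]
        have hFs : F (p₀, s) < 1 := (hmid s ⟨le_of_lt hs.1, hs.2⟩).2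
        have hFt₀ : F (p₀, t₀) = 1 := hend
        have hnum : F (p₀, s) - F (p₀, t₀) ≤ 0 := by rw [hFt₀]; linarith
        have hden : s - t₀ ≤ 0 := by linarith [hs.2]
        exact div_nonneg_of_nonpos hnum hden
      linarith
    · exact absurd h hv2ne
    · exact h
  -- a neighborhood where the time derivative is positive
  have hopen : IsOpen {w : (ℝ × ℝ) × ℝ | 0 < fderiv ℝ F w (((0:ℝ),(0:ℝ)),(1:ℝ))} :=
    isOpen_lt continuous_const hdtF
  have hw₀mem : w₀ ∈ {w : (ℝ × ℝ) × ℝ | 0 < fderiv ℝ F w (((0:ℝ),(0:ℝ)),(1:ℝ))} := by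
    simp only [mem_setOf_eq, hv2eq]; exact hv2pos
  obtain ⟨ρ, hρpos, hρball⟩ := Metric.isOpen_iff.1 hopen w₀ hw₀mem
  set ε : ℝ := min (ρ/2) (t₀/2) with hε
  have hεpos : 0 < ε := lt_min (by linarith) (by linarith)
  have hερ : ε ≤ ρ/2 := min_le_left _ _
  have hεt₀ : ε ≤ t₀/2 := min_le_right _ _
  have hball : ∀ p : ℝ × ℝ, ∀ t : ℝ, dist p p₀ < ρ/2 → |t - t₀| ≤ ε →
      0 < fderiv ℝ F (p, t) (((0:ℝ),(0:ℝ)),(1:ℝ)) := by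
    intro p t hp ht
    apply hρball
    rw [Metric.mem_ball]
    have hdist : dist ((p, t) : (ℝ × ℝ) × ℝ) w₀ = max (dist p p₀) (dist t t₀) := by
      rw [Prod.dist_eq]
    rw [hdist]
    refine max_lt (by linarith) ?_
    rw [Real.dist_eq]
    linarith
  -- strict monotonicity near the crossing
  have hmono : ∀ p : ℝ × ℝ, dist p p₀ < ρ/2 →
      StrictMonoOn (fun t => F (p, t)) (Icc (t₀ - ε) (t₀ + ε)) := by
    intro p hp
    refine strictMonoOn_of_deriv_pos (convex_Icc _ _) ?_ ?_
    · exact (hF.continuous.comp (continuous_const.prodMk continuous_id)).continuousOn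
    · intro t ht
      rw [interior_Icc] at ht
      rw [(hslice (p, t)).deriv]
      apply hball p t hp
      rw [abs_le]
      constructor <;> [linarith [ht.1]; linarith [ht.2]]
  -- inverse function theorem setup
  set Φ : (ℝ × ℝ) × ℝ → (ℝ × ℝ) × ℝ := fun w => (w.1, F w) with hΦdef
  have hΦC : ContDiff ℝ 1 Φ := contDiff_fst.prodMk hF
  set A : ((ℝ × ℝ) × ℝ) →L[ℝ] ((ℝ × ℝ) × ℝ) :=
    (ContinuousLinearMap.fst ℝ (ℝ × ℝ) ℝ).prod (fderiv ℝ F w₀) with hA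
  have hAd : HasFDerivAt Φ A w₀ :=
    (ContinuousLinearMap.fst ℝ (ℝ × ℝ) ℝ).hasFDerivAt.prodMk
      (hF.differentiable one_ne_zero w₀).hasFDerivAt
  have hAinj : Function.Injective A := by
    intro a b hab
    have h0 : A (a - b) = 0 := by rw [map_sub, hab, sub_self]
    have h1 : (a - b).1 = 0 ∧ fderiv ℝ F w₀ (a - b) = 0 := by
      have := Prod.mk.injEq _ _ _ _ ▸ h0
      exact ⟨congrArg Prod.fst h0, congrArg Prod.snd h0⟩
    have h2 : (a - b) = ((a-b).2) • ((((0:ℝ),(0:ℝ)),(1:ℝ)) : (ℝ × ℝ) × ℝ) := by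
      have := h1.1
      ext
      · rw [Prod.smul_def]; simp [Prod.ext_iff] at this ⊢; exact this.1
      · rw [Prod.smul_def]; simp [Prod.ext_iff] at this ⊢; exact this.2
      · simp
    have h3 : fderiv ℝ F w₀ (a - b) = (a-b).2 * (v 2) := by
      rw [h2, map_smul, hv2eq]; simp
    have h4 : (a - b).2 = 0 := by
      by_contra hne
      exact hne (by
        have := h1.2
        rw [h3] at this
        exact (mul_eq_zero.1 this).resolve_right hv2ne)
    have : a - b = 0 := by rw [h2, h4, zero_smul]
    exact sub_eq_zero.1 this
  have hAbij : Function.Bijective A :=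
    ⟨hAinj, (LinearMap.injective_iff_surjective (f := A.toLinearMap)).1 hAinj⟩
  set eA : ((ℝ × ℝ) × ℝ) ≃L[ℝ] ((ℝ × ℝ) × ℝ) :=
    LinearEquiv.toContinuousLinearEquiv (LinearEquiv.ofBijective A.toLinearMap hAbij) with heA
  have heAcoe : (eA : ((ℝ × ℝ) × ℝ) →L[ℝ] ((ℝ × ℝ) × ℝ)) = A := by
    ext w <;> rfl
  have hAe : HasFDerivAt Φ (eA : ((ℝ × ℝ) × ℝ) →L[ℝ] ((ℝ × ℝ) × ℝ)) w₀ := by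
    rw [heAcoe]; exact hAd
  have hΦat : ContDiffAt ℝ 1 Φ w₀ := hΦC.contDiffAt
  have hS : HasStrictFDerivAt Φ (eA : ((ℝ × ℝ) × ℝ) →L[ℝ] ((ℝ × ℝ) × ℝ)) w₀ :=
    hΦat.hasStrictFDerivAt' hAe one_ne_zero
  set inv : (ℝ × ℝ) × ℝ → (ℝ × ℝ) × ℝ := hS.localInverse Φ eA w₀ with hinvdef
  have hinvC : ContDiffAt ℝ 1 inv (Φ w₀) := hΦat.to_localInverse hAe one_ne_zero
  have hrinv : ∀ᶠ z in 𝓝 (Φ w₀), Φ (inv z) = z := hS.eventually_right_inverse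
  have hinvw₀ : inv (Φ w₀) = w₀ := hS.localInverse_apply_image
  have hFw₀ : F w₀ = 1 := hend
  have hΦw₀ : Φ w₀ = (p₀, 1) := Prod.ext rfl hFw₀
  -- the implicit function g
  set g : ℝ × ℝ → ℝ := fun p => (inv (p, (1:ℝ))).2 with hgdef
  have hj : ContDiffAt ℝ 1 (fun p : ℝ × ℝ => ((p, (1:ℝ)) : (ℝ × ℝ) × ℝ)) p₀ :=
    contDiffAt_id.prodMk contDiffAt_const
  have hinvC' : ContDiffAt ℝ 1 inv (p₀, (1:ℝ)) := hΦw₀ ▸ hinvC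
  have hgC : ContDiffAt ℝ 1 g p₀ :=
    contDiffAt_snd.comp p₀ (hinvC'.comp p₀ hj)
  have hgp₀ : g p₀ = t₀ := by
    show (inv ((p₀ : ℝ × ℝ), (1:ℝ))).2 = t₀
    rw [← hΦw₀, hinvw₀]
  -- gather the eventually statements
  have hEv1 : ∀ᶠ p in 𝓝 p₀, Φ (inv (p, (1:ℝ))) = (p, (1:ℝ)) := by
    have hjt : Tendsto (fun p : ℝ × ℝ => ((p, (1:ℝ)) : (ℝ × ℝ) × ℝ)) (𝓝 p₀) (𝓝 (Φ w₀)) := by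
      rw [hΦw₀]
      exact (continuous_id.prodMk continuous_const).continuousAt
    exact hjt.eventually hrinv
  have hEv2 : ∀ᶠ p in 𝓝 p₀, g p ∈ Ioo (t₀ - ε) (t₀ + ε) := by
    have hco : ContinuousAt g p₀ := hgC.continuousAt
    have hmem : g p₀ ∈ Ioo (t₀ - ε) (t₀ + ε) := by
      rw [hgp₀]; constructor <;> [linarith; linarith]
    exact hco.eventually_mem (isOpen_Ioo.mem_nhds hmem)
  have hEv3 : ∀ᶠ p in 𝓝 p₀, dist p p₀ < ρ/2 := by
    filter_upwards [Metric.ball_mem_nhds p₀ (by linarith : (0:ℝ) < ρ/2)] with p hp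
    exact Metric.mem_ball.1 hp
  have hEv4 : ∀ᶠ p in 𝓝 p₀, p.2 ∈ Ioo (0:ℝ) δstar := by
    have : IsOpen {p : ℝ × ℝ | p.2 ∈ Ioo (0:ℝ) δstar} := isOpen_Ioo.preimage continuous_snd
    exact this.mem_nhds hδ₀
  have hEv5 : ∀ᶠ p in 𝓝 p₀, 1 < F (p, t₀ + ε) := by
    have hcont : ContinuousAt (fun p : ℝ × ℝ => F (p, t₀ + ε)) p₀ :=
      (hF.continuous.comp (continuous_id.prodMk continuous_const)).continuousAt
    have hlt : 1 < F (p₀, t₀ + ε) := by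
      have hm := hmono p₀ (by rw [dist_self]; linarith)
      have h1 : t₀ ∈ Icc (t₀ - ε) (t₀ + ε) := ⟨by linarith, by linarith⟩
      have h2 : t₀ + ε ∈ Icc (t₀ - ε) (t₀ + ε) := ⟨by linarith, le_rfl⟩
      have hlt' : F (p₀, t₀) < F (p₀, t₀ + ε) := hm h1 h2 (by linarith)
      rw [show F (p₀, t₀) = 1 from hend] at hlt'
      exact hlt'
    have : IsOpen {p : ℝ × ℝ | 1 < F (p, t₀ + ε)} :=
      isOpen_lt continuous_const (hF.continuous.comp (continuous_id.prodMk continuous_const))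
    exact this.mem_nhds hlt
  have hEv6 : ∀ᶠ p in 𝓝 p₀, ∀ s ∈ Icc (0:ℝ) (t₀ - ε), F (p, s) < 1 := by
    apply IsCompact.eventually_forall_of_forall_eventually (isCompact_Icc)
    intro s hs
    have hs' : 0 ≤ s ∧ s < t₀ := ⟨hs.1, by linarith [hs.2]⟩
    have hFlt : F (p₀, s) < 1 := (hmid s ⟨hs'.1, hs'.2⟩).2
    have hopen' : IsOpen {z : (ℝ × ℝ) × ℝ | F z < 1} :=
      isOpen_lt hF.continuous continuous_const
    have : {z : (ℝ × ℝ) × ℝ | F z < 1} ∈ 𝓝 ((p₀, s) : (ℝ × ℝ) × ℝ) :=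
      hopen'.mem_nhds hFlt
    exact eventually_of_mem this (fun z hz => hz)
  -- conclude: τ ∘ xpt = g eventually
  have hEq : (fun p : ℝ × ℝ => τ (xpt p.1 p.2)) =ᶠ[𝓝 p₀] g := by
    filter_upwards [hEv1, hEv2, hEv3, hEv4, hEv5, hEv6] with p H1 H2 H3 H4 H5 H6
    obtain ⟨hτpos', hmid', hend'⟩ := hτ (xpt p.1 p.2) (norm_PL_xpt _ _) H4.1 H4.2
    set t' : ℝ := τ (xpt p.1 p.2) with ht'
    have hFt' : F (p, t') = 1 := hend'
    have hFmid : ∀ s ∈ Ico (0:ℝ) t', F (p, s) < 1 := fun s hs => (hmid' s hs).2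
    -- first coordinate identity and F (p, g p) = 1
    have hfst : (inv (p, (1:ℝ))).1 = p := congrArg Prod.fst H1
    have hFgp : F (p, g p) = 1 := by
      have hsnd : F (inv (p, (1:ℝ))) = 1 := congrArg Prod.snd H1
      have : inv (p, (1:ℝ)) = (p, g p) := by
        rw [hgdef]; exact Prod.ext hfst rfl
      rw [this] at hsnd
      exact hsnd
    -- t' is in the monotonicity window
    have hub : t' ≤ t₀ + ε := by
      by_contra hc
      push_neg at hc
      have := hFmid (t₀ + ε) ⟨by linarith, hc⟩
      linarith
    have hlb : t₀ - ε < t' := by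
      by_contra hc
      push_neg at hc
      have := H6 t' ⟨le_of_lt hτpos', hc⟩
      linarith
    have hm := hmono p H3
    have ht'mem : t' ∈ Icc (t₀ - ε) (t₀ + ε) := ⟨le_of_lt hlb, hub⟩
    have hgmem : g p ∈ Icc (t₀ - ε) (t₀ + ε) := Ioo_subset_Icc_self H2
    exact hm.injOn ht'mem hgmem (by rw [hFt', hFgp])
  exact hgC.congr_of_eventuallyEq hEq
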